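/- For any positive integer n, every order isomorphism of ℕ^n with the product order is induced by a permutation of the coordinates; consequently, the group of order automorphisms of (ℕ^n, product order) is isomorphic to the symmetric group S_n. -/

import Mathlib

namespace Stmt4Aux

lemma pnat_one_lt_two : (1:ℕ+) < 2 := by decide

variable {n : ℕ}

/-- The element of `Fin n → ℕ+` with value `k` at `i` and `1` elsewhere. -/
def pe (i : Fin n) (k : ℕ+) : Fin n → ℕ+ := fun j => if j = i then k else 1

lemma pe_self (i : Fin n) (k : ℕ+) : pe i k i = k := if_pos rfl

lemma pe_ne {i j : Fin n} (h : j ≠ i) (k : ℕ+) : pe i k j = 1 := if_neg h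

lemma pe_one (i : Fin n) : pe i 1 = ⊥ := by
  funext j
  by_cases h : j = i <;> simp [pe, h] <;> rfl

lemma pe_le_pe_self {i : Fin n} {k k' : ℕ+} (h : k ≤ k') : pe i k ≤ pe i k' := by
  intro j
  by_cases hj : j = i
  · subst hj; simpa [pe_self] using h
  · simp [pe_ne hj]

lemma pe_inj {i i' : Fin n} {k k' : ℕ+} (hk : 1 < k) (hk' : 1 < k')
    (h : pe i k = pe i' k') : i = i' ∧ k = k' := by
  by_cases hii : i = i'
  · subst hii
    refine ⟨rfl, ?_⟩
    have := congrFun h i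
    rwa [pe_self, pe_self] at this
  · have := congrFun h i
    rw [pe_self, pe_ne hii] at this
    exact absurd this.symm hk.ne

lemma supIrred_pe {i : Fin n} {k : ℕ+} (hk : 1 < k) : SupIrred (pe i k) := by
  constructor
  · intro hmin
    have h1 : pe i 1 ≤ pe i k := pe_le_pe_self hk.le
    have := hmin h1 i
    rw [pe_self, pe_self] at this
    exact absurd this (not_le.mpr hk)
  · intro a b hab
    have ha : a ≤ pe i k := le_sup_left.trans_eq hab
    have hb : b ≤ pe i k := le_sup_right.trans_eq hab
    have hi : a i ⊔ b i = k := by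
      have := congrFun hab i; rwa [pe_self] at this
    have : a i = k ∨ b i = k := by
      rcases le_total (a i) (b i) with h | h
      · right; rwa [sup_eq_right.mpr h] at hi
      · left; rwa [sup_eq_left.mpr h] at hi
    rcases this with h | h
    · left
      funext j
      by_cases hj : j = i
      · subst hj; rw [pe_self, h]
      · have := ha j
        rw [pe_ne hj] at this
        rw [pe_ne hj]
        exact le_antisymm this (PNat.one_le _)
    · right
      funext j
      by_cases hj : j = i
      · subst hj; rw [pe_self, h]
      · have := hb j
        rw [pe_ne hj] at this
        rw [pe_ne hj]
        exact le_antisymm this (PNat.one_le _)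

lemma supIrred_iff {x : Fin n → ℕ+} : SupIrred x ↔ ∃ i k, 1 < k ∧ x = pe i k := by
  constructor
  · intro hx
    have hne : x ≠ ⊥ := fun h => hx.1 (isMin_iff_eq_bot.mpr h)
    have : ∃ i, x i ≠ 1 := by
      by_contra h
      push_neg at h
      exact hne (funext fun j => by rw [h j]; rfl)
    obtain ⟨i, hi⟩ := this
    have hi1 : 1 < x i := lt_of_le_of_ne (PNat.one_le _) (Ne.symm hi)
    refine ⟨i, x i, hi1, ?_⟩
    funext j
    by_cases hj : j = i
    · subst hj; rw [pe_self]
    · rw [pe_ne hj]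
      by_contra hxj
      have hj1 : 1 < x j := lt_of_le_of_ne (PNat.one_le _) (Ne.symm hxj)
      -- split x as a join of two proper parts
      have hab : Function.update x i 1 ⊔ Function.update x j 1 = x := by
        funext l
        by_cases hl : l = i
        · subst hl
          have hlj : l ≠ j := fun h => hj h.symm
          simp only [Pi.sup_apply, Function.update_self, Function.update_of_ne hlj]
          exact sup_eq_right.mpr (PNat.one_le _)
        · by_cases hl' : l = j
          · subst hl'
            simp only [Pi.sup_apply, Function.update_self, Function.update_of_ne hl]
            exact sup_eq_left.mpr (PNat.one_le _)
          · simp only [Pi.sup_apply, Function.update_of_ne hl, Function.update_of_ne hl']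
            exact sup_idem _
      rcases hx.2 hab with h | h
      · have := congrFun h i
        rw [Function.update_self] at this
        exact hi this.symm
      · have := congrFun h j
        rw [Function.update_self] at this
        exact hxj this.symm
  · rintro ⟨i, k, hk, rfl⟩
    exact supIrred_pe hk

lemma map_supIrred (β : (Fin n → ℕ+) ≃o (Fin n → ℕ+)) {x : Fin n → ℕ+}
    (hx : SupIrred x) : SupIrred (β x) := by
  constructor
  · intro hmin
    have : β x = ⊥ := isMin_iff_eq_bot.mp hmin
    have : x = ⊥ := by
      have := congrArg β.symm this
      rwa [β.symm_apply_apply, map_bot] at this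
    exact hx.1 (isMin_iff_eq_bot.mpr this)
  · intro a b hab
    have h : β.symm a ⊔ β.symm b = x := by
      rw [← map_sup, hab, β.symm_apply_apply]
    rcases hx.2 h with h' | h'
    · left; rw [← h', β.apply_symm_apply]
    · right; rw [← h', β.apply_symm_apply]

/-- Step B: images of the `pe i k`, `k > 1`, under an order iso are again such. -/
lemma exists_pe_image (β : (Fin n → ℕ+) ≃o (Fin n → ℕ+)) (i : Fin n) {k : ℕ+} (hk : 1 < k) :
    ∃ j m, 1 < m ∧ β (pe i k) = pe j m :=
  supIrred_iff.mp (map_supIrred β (supIrred_pe hk))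

/-- Step C: there is a single coordinate receiving the whole chain at `i`. -/
lemma exists_chain_image (β : (Fin n → ℕ+) ≃o (Fin n → ℕ+)) (i : Fin n) :
    ∃ j, ∀ k : ℕ+, 1 < k → ∃ m, 1 < m ∧ β (pe i k) = pe j m := by
  obtain ⟨j, m₀, hm₀, h₀⟩ := exists_pe_image β i (pnat_one_lt_two)
  refine ⟨j, fun k hk => ?_⟩
  obtain ⟨j', m, hm, h⟩ := exists_pe_image β i hk
  have hle : pe j m₀ ≤ pe j' m := by
    rw [← h₀, ← h]
    exact β.monotone (pe_le_pe_self (show (2:ℕ+) ≤ k from hk))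
  have : j' = j := by
    by_contra hjj
    have := hle j
    rw [pe_self, pe_ne (fun h => hjj h.symm)] at this
    exact absurd this (not_le.mpr hm₀)
  exact ⟨m, hm, by rw [h, this]⟩

/-- The permutation-like index function for an order iso. -/
noncomputable def idx (β : (Fin n → ℕ+) ≃o (Fin n → ℕ+)) (i : Fin n) : Fin n :=
  (exists_chain_image β i).choose

lemma idx_spec (β : (Fin n → ℕ+) ≃o (Fin n → ℕ+)) (i : Fin n) {k : ℕ+} (hk : 1 < k) :
    ∃ m, 1 < m ∧ β (pe i k) = pe (idx β i) m :=
  (exists_chain_image β i).choose_spec k hk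

lemma idx_symm_idx (β : (Fin n → ℕ+) ≃o (Fin n → ℕ+)) (i : Fin n) :
    idx β.symm (idx β i) = i := by
  obtain ⟨m, hm, h⟩ := idx_spec β i (pnat_one_lt_two)
  obtain ⟨m', hm', h'⟩ := idx_spec β.symm (idx β i) hm
  have : pe i 2 = pe (idx β.symm (idx β i)) m' := by
    rw [← h', ← h, β.symm_apply_apply]
  exact ((pe_inj (pnat_one_lt_two) hm' this).1).symm

/-- Step E: on each chain, the order iso is the identity in the fibre value. -/
lemma map_pe (β : (Fin n → ℕ+) ≃o (Fin n → ℕ+)) (i : Fin n) (k : ℕ+) :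
    β (pe i k) = pe (idx β i) k := by
  rcases eq_or_ne k 1 with h | h
  · subst h; rw [pe_one, pe_one, map_bot]
  have hk : 1 < k := lt_of_le_of_ne (PNat.one_le k) (Ne.symm h)
  -- the value function along the chain
  set φ : ℕ+ → ℕ+ := fun k => β (pe i k) (idx β i) with hφ
  set ψ : ℕ+ → ℕ+ := fun m => β.symm (pe (idx β i) m) i with hψ
  have hφspec : ∀ k : ℕ+, 1 < k → 1 < φ k ∧ β (pe i k) = pe (idx β i) (φ k) := by
    intro k hk
    obtain ⟨m, hm, h⟩ := idx_spec β i hk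
    have : φ k = m := by rw [hφ]; simp only; rw [h, pe_self]
    exact ⟨this ▸ hm, this ▸ h⟩
  have hψspec : ∀ m : ℕ+, 1 < m → 1 < ψ m ∧ β.symm (pe (idx β i) m) = pe i (ψ m) := by
    intro m hm
    obtain ⟨m', hm', h⟩ := idx_spec β.symm (idx β i) hm
    rw [idx_symm_idx] at h
    have : ψ m = m' := by rw [hψ]; simp only; rw [h, pe_self]
    exact ⟨this ▸ hm', this ▸ h⟩
  have hψφ : ∀ k : ℕ+, 1 < k → ψ (φ k) = k := by
    intro k hk
    obtain ⟨h1, h2⟩ := hφspec k hk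
    obtain ⟨h3, h4⟩ := hψspec (φ k) h1
    have : pe i k = pe i (ψ (φ k)) := by rw [← h4, ← h2, β.symm_apply_apply]
    exact ((pe_inj hk h3 this).2).symm
  have hφψ : ∀ m : ℕ+, 1 < m → φ (ψ m) = m := by
    intro m hm
    obtain ⟨h1, h2⟩ := hψspec m hm
    obtain ⟨h3, h4⟩ := hφspec (ψ m) h1
    have : pe (idx β i) m = pe (idx β i) (φ (ψ m)) := by
      rw [← h4, ← h2, β.apply_symm_apply]
    exact ((pe_inj hm h3 this).2).symm
  -- build an order iso of {k // 1 < k} and use uniqueness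
  set S := {k : ℕ+ // 1 < k} with hS
  let F : S → S := fun k => ⟨φ k.1, (hφspec k.1 k.2).1⟩
  have hFmono : StrictMono F := by
    intro a b hab
    have h1 := (hφspec a.1 a.2).2
    have h2 := (hφspec b.1 b.2).2
    have hlt : pe i a.1 < pe i b.1 := by
      refine lt_of_le_of_ne (pe_le_pe_self (le_of_lt hab)) ?_
      intro h
      have := congrFun h i
      rw [pe_self, pe_self] at this
      exact (ne_of_lt hab) (Subtype.ext this)
    have hβ := β.strictMono hlt
    rw [h1, h2] at hβ
    have hle : φ a.1 ≤ φ b.1 := by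
      have h := hβ.le (idx β i)
      rwa [pe_self, pe_self] at h
    have hne : φ a.1 ≠ φ b.1 := fun h => hβ.ne (by rw [h])
    exact Subtype.coe_lt_coe.mp (lt_of_le_of_ne hle hne)
  have hFsurj : Function.Surjective F := by
    rintro ⟨m, hm⟩
    exact ⟨⟨ψ m, (hψspec m hm).1⟩, Subtype.ext (hφψ m hm)⟩
  have hErefl : StrictMono.orderIsoOfSurjective F hFmono hFsurj = OrderIso.refl S :=
    Subsingleton.elim _ _
  have hφk : φ k = k := by
    have h1 : StrictMono.orderIsoOfSurjective F hFmono hFsurj ⟨k, hk⟩ = F ⟨k, hk⟩ := rfl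
    rw [hErefl] at h1
    have := congrArg Subtype.val h1
    simpa using this.symm
  have := (hφspec k hk).2
  rwa [hφk] at this

lemma idx_injective (β : (Fin n → ℕ+) ≃o (Fin n → ℕ+)) : Function.Injective (idx β) := by
  intro i i' h
  have h1 := map_pe β i 2
  have h2 := map_pe β i' 2
  rw [h] at h1
  have : pe i 2 = pe i' 2 := β.injective (h1.trans h2.symm)
  exact (pe_inj pnat_one_lt_two pnat_one_lt_two this).1

/-- The permutation associated to an order iso. -/
noncomputable def permOf (β : (Fin n → ℕ+) ≃o (Fin n → ℕ+)) : Equiv.Perm (Fin n) :=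
  Equiv.ofBijective (idx β) (Finite.injective_iff_bijective.mp (idx_injective β))

lemma permOf_pe (β : (Fin n → ℕ+) ≃o (Fin n → ℕ+)) (i : Fin n) (k : ℕ+) :
    β (pe i k) = pe (permOf β i) k := map_pe β i k

/-- Part 1: every order iso is induced by a coordinate permutation. -/
lemma key (hn : 0 < n) (α : (Fin n → ℕ+) ≃o (Fin n → ℕ+)) :
    ∃ σ : Equiv.Perm (Fin n), ∀ (x : Fin n → ℕ+) (j : Fin n), α x j = x (σ j) := by
  have : Nonempty (Fin n) := ⟨⟨0, hn⟩⟩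
  set τ := permOf α with hτdef
  refine ⟨τ.symm, fun x j => ?_⟩
  have hne : (Finset.univ : Finset (Fin n)).Nonempty := Finset.univ_nonempty
  have hx : x = Finset.univ.sup' hne (fun i => pe i (x i)) := by
    funext l
    rw [Finset.sup'_apply]
    apply le_antisymm
    · have := Finset.le_sup' (f := fun i => pe i (x i) l) (Finset.mem_univ l)
      rwa [pe_self] at this
    · refine Finset.sup'_le _ _ fun i _ => ?_
      by_cases hl : l = i
      · subst hl; rw [pe_self]
      · rw [pe_ne hl]; exact PNat.one_le _
  calc α x j = α (Finset.univ.sup' hne fun i => pe i (x i)) j := by rw [← hx]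
    _ = (Finset.univ.sup' hne fun i => α (pe i (x i))) j := by
        rw [map_finset_sup']; rfl
    _ = (Finset.univ.sup' hne fun i => pe (τ i) (x i)) j := by
        simp only [permOf_pe]; rfl
    _ = Finset.univ.sup' hne (fun i => pe (τ i) (x i) j) := Finset.sup'_apply _ _ _
    _ = x (τ.symm j) := by
        apply le_antisymm
        · refine Finset.sup'_le _ _ fun i _ => ?_
          by_cases hj : j = τ i
          · subst hj
            rw [pe_self, Equiv.symm_apply_apply]
          · rw [pe_ne hj]; exact PNat.one_le _
        · have := Finset.le_sup' (f := fun i => pe (τ i) (x i) j)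
            (Finset.mem_univ (τ.symm j))
          rwa [Equiv.apply_symm_apply, pe_self] at this

/-- The order iso induced by a coordinate permutation. -/
def permIso (σ : Equiv.Perm (Fin n)) : (Fin n → ℕ+) ≃o (Fin n → ℕ+) where
  toFun x := x ∘ σ
  invFun x := x ∘ σ.symm
  left_inv x := funext fun j => by simp
  right_inv x := funext fun j => by simp
  map_rel_iff' := by
    intro x y
    constructor
    · intro h j
      simpa using h (σ.symm j)
    · intro h j
      exact h (σ j)

lemma permIso_apply (σ : Equiv.Perm (Fin n)) (x : Fin n → ℕ+) (j : Fin n) :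
    permIso σ x j = x (σ j) := rfl

lemma permIso_injective : Function.Injective (permIso (n := n)) := by
  intro σ τ h
  apply Equiv.ext
  intro j
  have := congrFun (congrArg (fun (e : (Fin n → ℕ+) ≃o (Fin n → ℕ+)) =>
    e (fun l => (l : Fin n).val.succPNat)) h) j
  simp only [permIso_apply] at this
  exact Fin.ext (Nat.succPNat_inj.mp this)

end Stmt4Aux

theorem stmt4 (n : ℕ) (hn : 0 < n) :
    (∀ α : (Fin n → ℕ+) ≃o (Fin n → ℕ+), ∃ σ : Equiv.Perm (Fin n),
      ∀ (x : Fin n → ℕ+) (j : Fin n), α x j = x (σ j)) ∧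
    Nonempty (Equiv.Perm (Fin n) ≃* ((Fin n → ℕ+) ≃o (Fin n → ℕ+))) := by
  open Stmt4Aux in
  refine ⟨Stmt4Aux.key hn, ?_⟩
  have hbij : Function.Bijective (fun σ : Equiv.Perm (Fin n) => permIso σ⁻¹) := by
    constructor
    · intro σ τ h
      simpa using inv_injective (permIso_injective h)
    · intro α
      obtain ⟨σ, hσ⟩ := Stmt4Aux.key hn α
      refine ⟨σ⁻¹, ?_⟩
      simp only [inv_inv]
      exact DFunLike.ext _ _ fun x => funext fun j => ((hσ x j).symm : permIso σ x j = α x j)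
  refine ⟨MulEquiv.mk' (Equiv.ofBijective _ hbij) ?_⟩
  intro a b
  simp only [Equiv.ofBijective_apply]
  exact DFunLike.ext _ _ fun x => funext fun j => by
    show x ((a * b)⁻¹ j) = x (b⁻¹ (a⁻¹ j))
    simp
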